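/- Let C be a clutter with the König property and without isolated vertices. Then C is unmixed if and only if there is a perfect matching e_1,…,e_g of König type such that for any two distinct edges e, e' of C and any two distinct vertices x ∈ e, y ∈ e' with {x, y} contained in some e_i, the set (e \ {x}) ∪ (e' \ {y}) contains an edge of C. -/

import Mathlib

variable {V : Type} [Fintype V] [DecidableEq V]

/-- A clutter: a family of finsets (edges), none of which contains another. -/
def IsClutter (E : Set (Finset V)) : Prop :=
  ∀ e ∈ E, ∀ f ∈ E, e ⊆ f → e = f

/-- A vertex cover: a set of vertices meeting every edge. -/
def IsVertexCover (E : Set (Finset V)) (C : Finset V) : Prop :=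
  ∀ e ∈ E, (e ∩ C).Nonempty

/-- A minimal vertex cover. -/
def IsMinimalVertexCover (E : Set (Finset V)) (C : Finset V) : Prop :=
  IsVertexCover E C ∧ ∀ D ⊂ C, ¬ IsVertexCover E D

/-- The covering number: minimum cardinality of a vertex cover. -/
noncomputable def coveringNumber (E : Set (Finset V)) : ℕ :=
  sInf {n : ℕ | ∃ C : Finset V, IsVertexCover E C ∧ C.card = n}

/-- Unmixed: all minimal vertex covers have the same cardinality. -/
def Unmixed (E : Set (Finset V)) : Prop :=
  ∀ C D : Finset V, IsMinimalVertexCover E C → IsMinimalVertexCover E D →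
    C.card = D.card

/-- A matching: a set of pairwise disjoint edges. -/
def IsMatching (E : Set (Finset V)) (M : Finset (Finset V)) : Prop :=
  ↑M ⊆ E ∧ (M : Set (Finset V)).Pairwise Disjoint

/-- The König property: the maximum size of a matching equals the covering number. -/
def HasKonigProperty (E : Set (Finset V)) : Prop :=
  (∃ M : Finset (Finset V), IsMatching E M ∧ M.card = coveringNumber E) ∧
  ∀ M : Finset (Finset V), IsMatching E M → M.card ≤ coveringNumber E

/-- A perfect matching of König type: pairwise disjoint edges `em 0, …, em (g-1)`
whose union is the whole vertex set, where `g` is the covering number. -/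
def IsPerfectMatchingKT (E : Set (Finset V)) {g : ℕ} (em : Fin g → Finset V) : Prop :=
  (∀ i, em i ∈ E) ∧ (∀ i j, i ≠ j → Disjoint (em i) (em j)) ∧
  (∀ x : V, ∃ i, x ∈ em i) ∧ g = coveringNumber E

/-- An independent set: contains no edge. -/
def IsIndependentSet (E : Set (Finset V)) (F : Finset V) : Prop :=
  ∀ e ∈ E, ¬ e ⊆ F

/-- A facet of the independence complex: a maximal independent set. -/
def IsFacet (E : Set (Finset V)) (F : Finset V) : Prop :=
  IsIndependentSet E F ∧ ∀ G : Finset V, IsIndependentSet E G → F ⊆ G → F = G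

/-- The set of facets of the independence complex of a clutter. -/
def cFacets (E : Set (Finset V)) : Set (Finset V) := {F | IsFacet E F}

/-- `F : Fin s → Finset V` is a shelling order of the family of facets `Fac`. -/
def IsShelling {s : ℕ} (Fac : Set (Finset V)) (F : Fin s → Finset V) : Prop :=
  Function.Injective F ∧ (∀ G : Finset V, G ∈ Fac ↔ ∃ i, F i = G) ∧
  ∀ i j : Fin s, i < j →
    ∃ v ∈ F j \ F i, ∃ l : Fin s, l < j ∧ F j \ F l = {v}

/-- A family of facets is shellable if it admits a shelling order. -/
def Shellable (Fac : Set (Finset V)) : Prop :=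
  ∃ (s : ℕ) (F : Fin s → Finset V), IsShelling Fac F

/-- A family of facets is pure if all its members have the same cardinality. -/
def PureFamily (Fac : Set (Finset V)) : Prop :=
  ∀ F ∈ Fac, ∀ G ∈ Fac, F.card = G.card

/-- Pure shellable: pure and shellable. -/
def PureShellable (Fac : Set (Finset V)) : Prop :=
  PureFamily Fac ∧ Shellable Fac

/-- A free vertex: a vertex belonging to exactly one edge. -/
def HasFreeVertex (E : Set (Finset V)) : Prop :=
  ∃ x : V, ∃ e ∈ E, x ∈ e ∧ ∀ f ∈ E, x ∈ f → f = e

/-- A cycle of length `r`: `r` distinct vertices and `r` distinct edges such that each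
of the vertices lies in exactly two of the edges and each of the edges contains exactly
two of the vertices. -/
def HasCycleOfLength (E : Set (Finset V)) (r : ℕ) : Prop :=
  ∃ (v : Fin r → V) (f : Fin r → Finset V),
    Function.Injective v ∧ Function.Injective f ∧ (∀ j, f j ∈ E) ∧
    (∀ i : Fin r, (Finset.univ.filter (fun j => v i ∈ f j)).card = 2) ∧
    (∀ j : Fin r, (Finset.univ.filter (fun i => v i ∈ f j)).card = 2)

lemma coveringNumber_le (E : Set (Finset V)) {C : Finset V} (h : IsVertexCover E C) :
    coveringNumber E ≤ C.card :=
  Nat.sInf_le ⟨C, h, rfl⟩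

lemma exists_minimal_subcover (E : Set (Finset V)) (C : Finset V) (hC : IsVertexCover E C) :
    ∃ D ⊆ C, IsMinimalVertexCover E D := by
  induction C using Finset.strongInduction with
  | _ C ih =>
    by_cases h : ∀ D ⊂ C, ¬ IsVertexCover E D
    · exact ⟨C, subset_rfl, hC, h⟩
    · push_neg at h
      obtain ⟨D, hD, hDc⟩ := h
      obtain ⟨D', hD', hmin⟩ := ih D hD hDc
      exact ⟨D', hD'.trans hD.subset, hmin⟩

lemma empty_not_mem_of_konig {E : Set (Finset V)} (hk : HasKonigProperty E) : ∅ ∉ E := by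
  intro h
  have hnocov : {n : ℕ | ∃ C : Finset V, IsVertexCover E C ∧ C.card = n} = ∅ := by
    ext n
    simp only [Set.mem_setOf_eq, Set.mem_empty_iff_false, iff_false, not_exists]
    rintro C ⟨hC, -⟩
    simpa using hC ∅ h
  have hcz : coveringNumber E = 0 := by
    rw [coveringNumber, hnocov, Nat.sInf_empty]
  have hm : IsMatching E ({∅} : Finset (Finset V)) := by
    constructor
    · intro f hf
      simp only [Finset.coe_singleton, Set.mem_singleton_iff] at hf
      rwa [hf]
    · simp [Set.pairwise_singleton]
  have := hk.2 _ hm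
  simp [hcz] at this

/-- Key counting lemma. -/
lemma key_count {g : ℕ} {em : Fin g → Finset V}
    (hdisj : ∀ i j, i ≠ j → Disjoint (em i) (em j)) {C : Finset V}
    (hne : ∀ i, (C ∩ em i).Nonempty) (hcard : C.card = g) :
    (∀ x ∈ C, ∃ i, x ∈ em i) ∧ (∀ i, (C ∩ em i).card = 1) := by
  classical
  set T := (Finset.univ : Finset (Fin g)).biUnion (fun i => C ∩ em i) with hT
  have hd : ∀ i ∈ (Finset.univ : Finset (Fin g)), ∀ j ∈ Finset.univ, i ≠ j →
      Disjoint (C ∩ em i) (C ∩ em j) := fun i _ j _ hij =>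
    (hdisj i j hij).mono Finset.inter_subset_right Finset.inter_subset_right
  have hTsub : T ⊆ C := by
    intro x hx
    simp only [hT, Finset.mem_biUnion] at hx
    obtain ⟨i, -, hx⟩ := hx
    exact (Finset.mem_inter.mp hx).1
  have hcardT : T.card = ∑ i : Fin g, (C ∩ em i).card := Finset.card_biUnion hd
  have h1 : ∀ i : Fin g, 1 ≤ (C ∩ em i).card := fun i => Finset.card_pos.mpr (hne i)
  have hsum1 : (∑ _i : Fin g, 1) = g := by simp
  have hge : g ≤ T.card := by
    rw [hcardT]
    calc g = ∑ _i : Fin g, 1 := hsum1.symm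
      _ ≤ ∑ i : Fin g, (C ∩ em i).card := Finset.sum_le_sum (fun i _ => h1 i)
  have hle : T.card ≤ g := hcard ▸ Finset.card_le_card hTsub
  have hTeq : T = C := Finset.eq_of_subset_of_card_le hTsub (by omega)
  constructor
  · intro x hx
    rw [← hTeq] at hx
    simp only [hT, Finset.mem_biUnion] at hx
    obtain ⟨i, -, hx⟩ := hx
    exact ⟨i, (Finset.mem_inter.mp hx).2⟩
  · intro i
    by_contra hne1
    have h2 : 1 < (C ∩ em i).card := lt_of_le_of_ne (h1 i) (Ne.symm hne1)
    have hlt : (∑ _i : Fin g, 1) < ∑ i : Fin g, (C ∩ em i).card :=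
      Finset.sum_lt_sum (fun j _ => h1 j) ⟨i, Finset.mem_univ i, h2⟩
    rw [hsum1, ← hcardT] at hlt
    omega

/-- If a clutter has no empty edge, there is a minimal vertex cover of minimum cardinality. -/
lemma exists_min_cover_card (E : Set (Finset V)) (hE : ∅ ∉ E) :
    ∃ D : Finset V, IsMinimalVertexCover E D ∧ D.card = coveringNumber E := by
  have huniv : IsVertexCover E Finset.univ := by
    intro e he
    rw [Finset.inter_univ]
    rcases Finset.eq_empty_or_nonempty e with h | h
    · exact absurd (h ▸ he) hE
    · exact h
  have hmem : coveringNumber E ∈ {n : ℕ | ∃ C : Finset V, IsVertexCover E C ∧ C.card = n} :=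
    Nat.sInf_mem ⟨_, Finset.univ, huniv, rfl⟩
  obtain ⟨C, hC, hCcard⟩ := hmem
  obtain ⟨D, hDC, hDmin⟩ := exists_minimal_subcover E C hC
  refine ⟨D, hDmin, le_antisymm ?_ (coveringNumber_le E hDmin.1)⟩
  calc D.card ≤ C.card := Finset.card_le_card hDC
    _ = coveringNumber E := hCcard

/-- Minimality gives, for every vertex of a minimal cover, an edge meeting the cover
exactly there. -/
lemma exists_private_edge {E : Set (Finset V)} {C : Finset V}
    (hC : IsMinimalVertexCover E C) {c : V} (hc : c ∈ C) :
    ∃ e ∈ E, e ∩ C = {c} := by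
  have hsub : C.erase c ⊂ C := Finset.erase_ssubset hc
  have := hC.2 _ hsub
  rw [IsVertexCover] at this
  push_neg at this
  obtain ⟨e, he, hee⟩ := this
  refine ⟨e, he, ?_⟩
  have hsub1 : e ∩ C ⊆ {c} := by
    intro v hv
    rw [Finset.mem_inter] at hv
    rw [Finset.mem_singleton]
    by_contra hvc
    exact Finset.nonempty_iff_ne_empty.mp ⟨v, Finset.mem_inter.mpr ⟨hv.1, Finset.mem_erase.mpr ⟨hvc, hv.2⟩⟩⟩ hee
  rcases Finset.subset_singleton_iff.mp hsub1 with h | h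
  · exact absurd h (hC.1 e he).ne_empty
  · exact h

/-- A clutter with the König property and without isolated vertices is
unmixed iff it has a perfect matching of König type satisfying the exchange condition. -/
theorem unmixed_iff_exchange_condition
    (E : Set (Finset V)) (hclut : IsClutter E)
    (hkonig : HasKonigProperty E) (hnoiso : ∀ x : V, ∃ e ∈ E, x ∈ e) :
    Unmixed E ↔
      ∃ (g : ℕ) (em : Fin g → Finset V), IsPerfectMatchingKT E em ∧
        ∀ e ∈ E, ∀ e' ∈ E, e ≠ e' → ∀ x ∈ e, ∀ y ∈ e', x ≠ y →
          (∃ i, x ∈ em i ∧ y ∈ em i) →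
          ∃ f ∈ E, f ⊆ e.erase x ∪ e'.erase y := by
  classical
  have hempty : ∅ ∉ E := empty_not_mem_of_konig hkonig
  obtain ⟨Dg, hDgmin, hDgcard⟩ := exists_min_cover_card E hempty
  constructor
  · -- forward direction
    intro hunmix
    obtain ⟨M, hM, hMcard⟩ := hkonig.1
    set g := coveringNumber E with hg
    let eqv : M ≃ Fin g := M.equivFinOfCardEq hMcard
    set em : Fin g → Finset V := fun i => ((eqv.symm i : M) : Finset V) with hem
    have hemM : ∀ i, em i ∈ M := fun i => (eqv.symm i).2
    have hemE : ∀ i, em i ∈ E := fun i => hM.1 (hemM i)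
    have hdisj : ∀ i j, i ≠ j → Disjoint (em i) (em j) := by
      intro i j hij
      refine hM.2 (hemM i) (hemM j) ?_
      intro heq
      apply hij
      have : eqv.symm i = eqv.symm j := Subtype.ext heq
      exact eqv.symm.injective this
    -- any minimal vertex cover has cardinality g, meets each em i once, lies in their union
    have hkey : ∀ C : Finset V, IsMinimalVertexCover E C →
        C.card = g ∧ (∀ x ∈ C, ∃ i, x ∈ em i) ∧ (∀ i, (C ∩ em i).card = 1) := by
      intro C hC
      have hCcard : C.card = g := by
        rw [← hDgcard]; exact hunmix C Dg hC hDgmin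
      have hne : ∀ i, (C ∩ em i).Nonempty := by
        intro i
        obtain ⟨v, hv⟩ := hC.1 _ (hemE i)
        exact ⟨v, Finset.mem_inter.mpr ⟨(Finset.mem_inter.mp hv).2, (Finset.mem_inter.mp hv).1⟩⟩
      obtain ⟨h1, h2⟩ := key_count hdisj hne hCcard
      exact ⟨hCcard, h1, h2⟩
    refine ⟨g, em, ⟨hemE, hdisj, ?_, rfl⟩, ?_⟩
    · -- the matching is perfect
      intro x
      obtain ⟨e, he, hxe⟩ := hnoiso x
      set C₀ : Finset V := insert x eᶜ with hC₀
      have hC₀cov : IsVertexCover E C₀ := by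
        intro f hf
        by_cases hsub : f ⊆ e
        · have hfe : f = e := hclut f hf e he hsub
          exact ⟨x, Finset.mem_inter.mpr ⟨hfe ▸ hxe, Finset.mem_insert_self _ _⟩⟩
        · obtain ⟨v, hvf, hve⟩ := Finset.not_subset.mp hsub
          exact ⟨v, Finset.mem_inter.mpr ⟨hvf,
            Finset.mem_insert.mpr (Or.inr (Finset.mem_compl.mpr hve))⟩⟩
      obtain ⟨D, hDC₀, hDmin⟩ := exists_minimal_subcover E C₀ hC₀cov
      have hxD : x ∈ D := by
        obtain ⟨v, hv⟩ := hDmin.1 e he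
        rw [Finset.mem_inter] at hv
        have hvC₀ : v ∈ C₀ := hDC₀ hv.2
        rcases Finset.mem_insert.mp hvC₀ with h | h
        · exact h ▸ hv.2
        · exact absurd hv.1 (Finset.mem_compl.mp h)
      obtain ⟨-, h1, -⟩ := hkey D hDmin
      exact h1 x hxD
    · -- the exchange condition
      intro e he e' he' hee' x hxe y hye hxy ⟨i, hxi, hyi⟩
      by_contra hno
      push_neg at hno
      set B : Finset V := e.erase x ∪ e'.erase y with hB
      have hBind : IsIndependentSet E B := fun f hf hsub => hno f hf hsub
      -- extend B to an independent set of maximum cardinality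
      set S : Finset (Finset V) :=
        Finset.univ.powerset.filter (fun A => IsIndependentSet E A ∧ B ⊆ A) with hS
      have hBS : B ∈ S := by
        simp only [hS, Finset.mem_filter, Finset.mem_powerset]
        exact ⟨Finset.subset_univ _, hBind, subset_rfl⟩
      obtain ⟨A, hAS, hAmax⟩ := Finset.exists_max_image S Finset.card ⟨B, hBS⟩
      simp only [hS, Finset.mem_filter, Finset.mem_powerset] at hAS
      obtain ⟨-, hAind, hBA⟩ := hAS
      set C : Finset V := Aᶜ with hC
      have hCcov : IsVertexCover E C := by
        intro f hf
        obtain ⟨v, hvf, hvA⟩ := Finset.not_subset.mp (hAind f hf)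
        exact ⟨v, Finset.mem_inter.mpr ⟨hvf, Finset.mem_compl.mpr hvA⟩⟩
      have hCmin : IsMinimalVertexCover E C := by
        refine ⟨hCcov, ?_⟩
        intro D hD hDcov
        have hDind : IsIndependentSet E Dᶜ := by
          intro f hf hsub
          obtain ⟨v, hv⟩ := hDcov f hf
          rw [Finset.mem_inter] at hv
          exact Finset.mem_compl.mp (hsub hv.1) hv.2
        have hADc : A ⊆ Dᶜ := by
          intro a ha
          rw [Finset.mem_compl]
          intro haD
          exact Finset.mem_compl.mp (hD.subset haD) ha
        have hDcS : Dᶜ ∈ S := by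
          simp only [hS, Finset.mem_filter, Finset.mem_powerset]
          exact ⟨Finset.subset_univ _, hDind, hBA.trans hADc⟩
        have hle := hAmax _ hDcS
        have hAcard : A.card ≤ Fintype.card V := Finset.card_le_univ A
        have hDcard : D.card < C.card := Finset.card_lt_card hD
        rw [Finset.card_compl] at hle
        have hCc : C.card = Fintype.card V - A.card := Finset.card_compl A
        omega
      obtain ⟨-, -, h2⟩ := hkey C hCmin
      -- x and y both lie in C
      have hCe : ∀ v ∈ C, v ∈ e → v = x := by
        intro v hvC hve
        by_contra hvx
        have : v ∈ B := Finset.mem_union_left _ (Finset.mem_erase.mpr ⟨hvx, hve⟩)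
        exact Finset.mem_compl.mp hvC (hBA this)
      have hCe' : ∀ v ∈ C, v ∈ e' → v = y := by
        intro v hvC hve
        by_contra hvy
        have : v ∈ B := Finset.mem_union_right _ (Finset.mem_erase.mpr ⟨hvy, hve⟩)
        exact Finset.mem_compl.mp hvC (hBA this)
      have hxC : x ∈ C := by
        obtain ⟨v, hv⟩ := hCcov e he
        rw [Finset.mem_inter] at hv
        have := hCe v hv.2 hv.1
        exact this ▸ hv.2
      have hyC : y ∈ C := by
        obtain ⟨v, hv⟩ := hCcov e' he'
        rw [Finset.mem_inter] at hv
        have := hCe' v hv.2 hv.1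
        exact this ▸ hv.2
      have hpair : ({x, y} : Finset V) ⊆ C ∩ em i := by
        intro v hv
        rcases Finset.mem_insert.mp hv with h | h
        · exact h ▸ Finset.mem_inter.mpr ⟨hxC, hxi⟩
        · rw [Finset.mem_singleton] at h
          exact h ▸ Finset.mem_inter.mpr ⟨hyC, hyi⟩
      have h2card : 2 ≤ (C ∩ em i).card := by
        calc 2 = ({x, y} : Finset V).card := (Finset.card_pair hxy).symm
          _ ≤ (C ∩ em i).card := Finset.card_le_card hpair
      rw [h2 i] at h2card
      omega
  · -- backward direction
    rintro ⟨g, em, ⟨hemE, hdisj, hcovV, hg⟩, hexch⟩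
    have hmain : ∀ C : Finset V, IsMinimalVertexCover E C → C.card = g := by
      intro C hC
      have hge : g ≤ C.card := hg ▸ coveringNumber_le E hC.1
      -- each em i meets C in at most one vertex
      have hone : ∀ i, (C ∩ em i).card ≤ 1 := by
        intro i
        by_contra hgt
        push_neg at hgt
        obtain ⟨x, hx, y, hy, hxy⟩ := Finset.one_lt_card.mp hgt
        rw [Finset.mem_inter] at hx hy
        obtain ⟨e, he, heC⟩ := exists_private_edge hC hx.1
        obtain ⟨e', he', heC'⟩ := exists_private_edge hC hy.1
        have hxe : x ∈ e := by
          have : x ∈ e ∩ C := heC ▸ Finset.mem_singleton_self x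
          exact (Finset.mem_inter.mp this).1
        have hye : y ∈ e' := by
          have : y ∈ e' ∩ C := heC' ▸ Finset.mem_singleton_self y
          exact (Finset.mem_inter.mp this).1
        have hee' : e ≠ e' := by
          intro h
          rw [h, heC'] at heC
          exact hxy (Finset.singleton_injective heC.symm)
        obtain ⟨f, hf, hfsub⟩ :=
          hexch e he e' he' hee' x hxe y hye hxy ⟨i, hx.2, hy.2⟩
        obtain ⟨v, hv⟩ := hC.1 f hf
        rw [Finset.mem_inter] at hv
        rcases Finset.mem_union.mp (hfsub hv.1) with h | h
        · rw [Finset.mem_erase] at h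
          have : v ∈ e ∩ C := Finset.mem_inter.mpr ⟨h.2, hv.2⟩
          rw [heC, Finset.mem_singleton] at this
          exact h.1 this
        · rw [Finset.mem_erase] at h
          have : v ∈ e' ∩ C := Finset.mem_inter.mpr ⟨h.2, hv.2⟩
          rw [heC', Finset.mem_singleton] at this
          exact h.1 this
      -- C is covered by the em i's
      have hsub : C ⊆ (Finset.univ : Finset (Fin g)).biUnion (fun i => C ∩ em i) := by
        intro x hx
        obtain ⟨i, hi⟩ := hcovV x
        exact Finset.mem_biUnion.mpr ⟨i, Finset.mem_univ i, Finset.mem_inter.mpr ⟨hx, hi⟩⟩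
      have hd : ∀ i ∈ (Finset.univ : Finset (Fin g)), ∀ j ∈ Finset.univ, i ≠ j →
          Disjoint (C ∩ em i) (C ∩ em j) := fun i _ j _ hij =>
        (hdisj i j hij).mono Finset.inter_subset_right Finset.inter_subset_right
      have hle : C.card ≤ g := by
        calc C.card ≤ ((Finset.univ : Finset (Fin g)).biUnion (fun i => C ∩ em i)).card :=
              Finset.card_le_card hsub
          _ = ∑ i : Fin g, (C ∩ em i).card := Finset.card_biUnion hd
          _ ≤ ∑ _i : Fin g, 1 := Finset.sum_le_sum (fun i _ => hone i)
          _ = g := by simp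
      omega
    intro C D hC hD
    rw [hmain C hC, hmain D hD]
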